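/- Fix γ ∈ (0, 2), a point x_k ∈ ℝ^d, noise z ∈ ℝ^d, and a differentiable log-density ln p : ℝ^d → ℝ. A point x satisfies the implicit backward update x = x_k + γ[(1/2)x + ∇ln p(x)] + √γ·z if and only if x is a critical point of u ↦ −(2γ/(2−γ))·ln p(u) + (1/2)‖u − (2/(2−γ))(x_k + √γ z)‖². -/

import Mathlib

/-- The fully backward update `x = x_k + γ[(1/2)x + ∇ln p(x)] + √γ z` holds iff `x` is a
critical point of `u ↦ −(2γ/(2−γ)) ln p(u) + ½‖u − (2/(2−γ))(x_k + √γ z)‖²`. -/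
theorem stmt10 {d : ℕ} (γ : ℝ) (hγ0 : 0 < γ) (hγ2 : γ < 2)
    (xk z x : EuclideanSpace ℝ (Fin d)) (lnp : EuclideanSpace ℝ (Fin d) → ℝ)
    (hlnp : Differentiable ℝ lnp) :
    (x = xk + γ • ((1 / 2 : ℝ) • x + gradient lnp x) + Real.sqrt γ • z)
      ↔ gradient (fun u => -(2 * γ / (2 - γ)) * lnp u
          + (1 / 2) * ‖u - (2 / (2 - γ)) • (xk + Real.sqrt γ • z)‖ ^ 2) x = 0 := by
  set g := gradient lnp x with hg
  set b := (2 / (2 - γ)) • (xk + Real.sqrt γ • z) with hb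
  set c := -(2 * γ / (2 - γ)) with hc
  have hne : (2 - γ) ≠ 0 := by linarith
  -- compute the gradient of the objective
  have hgrad : HasGradientAt
      (fun u => c * lnp u + (1 / 2) * ‖u - b‖ ^ 2) (c • g + (x - b)) x := by
    rw [hasGradientAt_iff_hasFDerivAt]
    have h1 : HasFDerivAt lnp (InnerProductSpace.toDual ℝ _ g) x :=
      (hlnp.differentiableAt.hasGradientAt).hasFDerivAt
    have h2 : HasFDerivAt (fun u : EuclideanSpace ℝ (Fin d) => u - b)
        (ContinuousLinearMap.id ℝ _) x := (hasFDerivAt_id x).sub_const b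
    have h3 := h2.norm_sq
    have h4 := (h1.const_mul c).add (h3.const_mul (1 / 2 : ℝ))
    refine h4.congr_fderiv ?_
    ext w
    simp [inner_add_left, inner_smul_left, real_inner_smul_left, two_smul,
      InnerProductSpace.toDual_apply_apply, real_inner_comm]
    ring
  rw [hgrad.gradient]
  rw [← sub_eq_zero (a := x)]
  have key : c • g + (x - b) =
      (2 / (2 - γ)) • (x - (xk + γ • ((1 / 2 : ℝ) • x + g) + Real.sqrt γ • z)) := by
    rw [hb, hc]
    match_scalars <;> field_simp <;> ring
  rw [key, smul_eq_zero]
  simp [div_eq_zero_iff, hne]
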